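/- Let (d_n) be a sequence of integrable random variables adapted to a filtration (F_n) such that E(d_n | F_{n−1}) ≤ 0 a.s. and d_n ≤ M a.s. for all n, for some constant M > 0. Let 0 < λ₀ ≤ M⁻¹, A_n = Σ_{i=1}^n d_i, B_n² = (1 + (1/2)λ₀M)·Σ_{i=1}^n E(d_i² | F_{i−1}), with A₀ = B₀ = 0. Then for every 0 ≤ λ ≤ λ₀, the process ( exp( λA_n − (1/2)λ²B_n² ) )_{n ≥ 0} is a supermartingale with respect to (F_n). -/

import Mathlib

open MeasureTheory

lemma aux_exp_neg (y : ℝ) (hy : y ≤ 0) : Real.exp y ≤ 1 + y + y ^ 2 / 2 := by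
  have hanti : AntitoneOn (fun x : ℝ => 1 + x + x ^ 2 / 2 - Real.exp x) (Set.Iic 0) := by
    apply antitoneOn_of_deriv_nonpos (convex_Iic 0)
    · fun_prop
    · apply Differentiable.differentiableOn; fun_prop
    · intro x hx
      have h1 : HasDerivAt (fun x : ℝ => 1 + x + x ^ 2 / 2 - Real.exp x)
          (0 + 1 + ((2:ℕ) * x ^ (2-1) / 2) - Real.exp x) x := by
        exact (((hasDerivAt_const x (1:ℝ)).add (hasDerivAt_id x)).add
          ((hasDerivAt_pow 2 x).div_const 2)).sub (Real.hasDerivAt_exp x)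
      rw [h1.deriv]
      simp only [pow_one, Nat.cast_ofNat]
      have := Real.add_one_le_exp x
      linarith
  have := hanti (Set.mem_Iic.2 hy) (Set.mem_Iic.2 le_rfl) hy
  simp at this
  linarith

lemma aux_exp_key (u y : ℝ) (hu0 : 0 ≤ u) (hu1 : u ≤ 1) (hy : y ≤ u) :
    Real.exp y ≤ 1 + y + (1 / 2 + u / 4) * y ^ 2 := by
  rcases le_or_gt y 0 with h | h
  · have := aux_exp_neg y h
    nlinarith [sq_nonneg y]
  · have hy1 : y ≤ 1 := hy.trans hu1
    have hb := Real.exp_bound' h.le hy1 (n := 3) (by norm_num)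
    simp [Finset.sum_range_succ, Nat.factorial] at hb
    have h3 : y ^ 3 ≤ u * y ^ 2 := by nlinarith
    nlinarith

/-- Lemma 1.5. -/
theorem stmt_11 {Ω : Type*} {mΩ : MeasurableSpace Ω} {μ : Measure Ω}
    [IsProbabilityMeasure μ] (ℱ : Filtration ℕ mΩ)
    (M lam0 : ℝ) (hM : 0 < M) (hlam0 : 0 < lam0) (hlam0' : lam0 ≤ M⁻¹)
    (d : ℕ → Ω → ℝ)
    (hadp : ∀ n, StronglyMeasurable[ℱ (n + 1)] (d (n + 1)))
    (hint : ∀ n, Integrable (d (n + 1)) μ)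
    (hint2 : ∀ n, Integrable (fun ω => (d (n + 1) ω) ^ 2) μ)
    (hcond : ∀ n, ∀ᵐ ω ∂μ, (μ[d (n + 1) | ℱ n]) ω ≤ 0)
    (hbdd : ∀ n, ∀ᵐ ω ∂μ, d (n + 1) ω ≤ M)
    (lam : ℝ) (hlam : 0 ≤ lam) (hlam' : lam ≤ lam0) :
    Supermartingale
      (fun n ω => Real.exp (lam * (∑ i ∈ Finset.range n, d (i + 1) ω) -
        (1 / 2) * lam ^ 2 * ((1 + (1 / 2) * lam0 * M) *
          ∑ i ∈ Finset.range n, (μ[fun ω' => (d (i + 1) ω') ^ 2 | ℱ i]) ω))) ℱ μ := by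
  set c : ℝ := 1 + (1 / 2) * lam0 * M with hc_def
  set F : ℕ → Ω → ℝ := fun n ω => Real.exp (lam * (∑ i ∈ Finset.range n, d (i + 1) ω) -
        (1 / 2) * lam ^ 2 * (c * ∑ i ∈ Finset.range n, (μ[fun ω' => (d (i + 1) ω') ^ 2 | ℱ i]) ω))
    with hF_def
  have hu0 : (0:ℝ) ≤ lam0 * M := le_of_lt (mul_pos hlam0 hM)
  have hu1 : lam0 * M ≤ 1 := by
    have := mul_le_mul_of_nonneg_right hlam0' hM.le
    rwa [inv_mul_cancel₀ hM.ne'] at this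
  have hc1 : (1:ℝ) ≤ c := by simp only [hc_def]; linarith
  -- measurability of F n w.r.t. ℱ n
  have hFmeas : ∀ n, StronglyMeasurable[ℱ n] (F n) := by
    intro n
    have hS : StronglyMeasurable[ℱ n] (fun ω => ∑ i ∈ Finset.range n, d (i + 1) ω) := by
      apply Finset.stronglyMeasurable_fun_sum
      intro i hi
      exact (hadp i).mono (ℱ.mono (Finset.mem_range.mp hi))
    have hT : StronglyMeasurable[ℱ n]
        (fun ω => ∑ i ∈ Finset.range n, (μ[fun ω' => (d (i + 1) ω') ^ 2 | ℱ i]) ω) := by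
      apply Finset.stronglyMeasurable_fun_sum
      intro i hi
      exact stronglyMeasurable_condExp.mono (ℱ.mono (le_of_lt (Finset.mem_range.mp hi)))
    exact Real.continuous_exp.comp_stronglyMeasurable
      ((hS.const_mul lam).sub ((hT.const_mul c).const_mul ((1/2) * lam ^ 2)))
  have hTnonneg : ∀ i, ∀ᵐ ω ∂μ, 0 ≤ (μ[fun ω' => (d (i + 1) ω') ^ 2 | ℱ i]) ω :=
    fun i => condExp_nonneg (Filter.Eventually.of_forall fun ω => sq_nonneg _)
  -- a.e. bound for F n
  have hFbdd : ∀ n, ∀ᵐ ω ∂μ, F n ω ≤ Real.exp (lam * (n * M)) := by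
    intro n
    filter_upwards [ae_all_iff.2 hbdd, ae_all_iff.2 hTnonneg] with ω h1 h2
    apply Real.exp_le_exp.2
    have hSle : (∑ i ∈ Finset.range n, d (i + 1) ω) ≤ n * M := by
      calc (∑ i ∈ Finset.range n, d (i + 1) ω) ≤ ∑ i ∈ Finset.range n, M :=
        Finset.sum_le_sum fun i _ => h1 i
      _ = n * M := by simp
    have hTn : 0 ≤ ∑ i ∈ Finset.range n, (μ[fun ω' => (d (i + 1) ω') ^ 2 | ℱ i]) ω :=
      Finset.sum_nonneg fun i _ => h2 i
    have hcn : 0 ≤ c := by linarith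
    have hx : 0 ≤ (1 / 2) * lam ^ 2 *
        (c * ∑ i ∈ Finset.range n, (μ[fun ω' => (d (i + 1) ω') ^ 2 | ℱ i]) ω) :=
      mul_nonneg (by positivity) (mul_nonneg hcn hTn)
    linarith [mul_le_mul_of_nonneg_left hSle hlam]
  have hFint : ∀ n, Integrable (F n) μ := by
    intro n
    refine Integrable.mono' (integrable_const (Real.exp (lam * (n * M))))
      ((hFmeas n).mono (ℱ.le n)).aestronglyMeasurable ?_
    filter_upwards [hFbdd n] with ω h
    rwa [Real.norm_eq_abs, abs_of_nonneg (Real.exp_nonneg _)]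
  refine supermartingale_nat (fun n => hFmeas n) hFint ?_
  intro n
  -- the one-step inequality
  set g : Ω → ℝ := fun ω => (1 / 2) * lam ^ 2 *
    (c * (μ[fun ω' => (d (n + 1) ω') ^ 2 | ℱ n]) ω) with hg_def
  set φ : Ω → ℝ := fun ω => F n ω * Real.exp (-(g ω)) with hφ_def
  set e : Ω → ℝ := fun ω => Real.exp (lam * d (n + 1) ω) with he_def
  have hprod : F (n + 1) = φ * e := by
    funext ω
    simp only [hφ_def, he_def, hF_def, hg_def, Pi.mul_apply, ← Real.exp_add]
    congr 1
    rw [Finset.sum_range_succ, Finset.sum_range_succ]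
    ring
  have hφmeas : StronglyMeasurable[ℱ n] φ :=
    (hFmeas n).mul (Real.continuous_exp.comp_stronglyMeasurable
      (((stronglyMeasurable_condExp.const_mul c).const_mul ((1/2) * lam ^ 2)).neg))
  have he_meas : AEStronglyMeasurable e μ :=
    (Real.continuous_exp.comp_stronglyMeasurable
      (((hadp n).mono (ℱ.le (n + 1))).const_mul lam)).aestronglyMeasurable
  have he_int : Integrable e μ := by
    refine Integrable.mono' (integrable_const (Real.exp (lam * M))) he_meas ?_
    filter_upwards [hbdd n] with ω h
    rw [Real.norm_eq_abs, abs_of_nonneg (Real.exp_nonneg _)]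
    exact Real.exp_le_exp.2 (mul_le_mul_of_nonneg_left h hlam)
  have hφe_int : Integrable (φ * e) μ := hprod ▸ hFint (n + 1)
  have hpull : μ[φ * e | ℱ n] =ᵐ[μ] φ * μ[e | ℱ n] :=
    condExp_mul_of_stronglyMeasurable_left hφmeas hφe_int he_int
  -- key: μ[e|ℱ n] ≤ᵐ exp ∘ g
  set p : Ω → ℝ := fun ω => 1 + lam * d (n + 1) ω +
    ((1 / 2) * lam ^ 2 * c) * (d (n + 1) ω) ^ 2 with hp_def
  have hp_int : Integrable p μ := by
    apply Integrable.add
    apply Integrable.add (integrable_const 1) ((hint n).const_mul lam)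
    exact (hint2 n).const_mul _
  have hep : e ≤ᵐ[μ] p := by
    filter_upwards [hbdd n] with ω h
    have hy : lam * d (n + 1) ω ≤ lam0 * M := by
      calc lam * d (n + 1) ω ≤ lam * M := mul_le_mul_of_nonneg_left h hlam
      _ ≤ lam0 * M := mul_le_mul_of_nonneg_right hlam' hM.le
    have := aux_exp_key (lam0 * M) (lam * d (n + 1) ω) hu0 hu1 hy
    simp only [he_def, hp_def]
    nlinarith [sq_nonneg (lam * d (n + 1) ω)]
  have hcond_e : μ[e | ℱ n] ≤ᵐ[μ] μ[p | ℱ n] := condExp_mono he_int hp_int hep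
  have hp_eq : μ[p | ℱ n] =ᵐ[μ] fun ω => 1 + lam * (μ[d (n + 1) | ℱ n]) ω +
      ((1 / 2) * lam ^ 2 * c) * (μ[fun ω' => (d (n + 1) ω') ^ 2 | ℱ n]) ω := by
    have h1 : p = (fun _ => (1:ℝ)) + (lam • d (n + 1)) +
        (((1 / 2) * lam ^ 2 * c) • fun ω => (d (n + 1) ω) ^ 2) := by
      funext ω; simp [hp_def]
    rw [h1]
    refine (condExp_add (Integrable.add (integrable_const 1) ((hint n).smul lam))
      ((hint2 n).smul _) (ℱ n)).trans ?_
    have h2 := condExp_add (μ := μ) (m := ℱ n) (integrable_const (1:ℝ)) ((hint n).smul lam)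
    have h3 := condExp_smul (μ := μ) (m := ℱ n) lam (d (n + 1))
    have h4 := condExp_smul (μ := μ) (m := ℱ n) ((1 / 2) * lam ^ 2 * c)
      (fun ω => (d (n + 1) ω) ^ 2)
    filter_upwards [h2, h3, h4] with ω e2 e3 e4
    simp only [Pi.add_apply, Pi.smul_apply, smul_eq_mul] at *
    rw [e2, e3, e4, condExp_const (ℱ.le n)]
  have hkey : μ[e | ℱ n] ≤ᵐ[μ] fun ω => Real.exp (g ω) := by
    refine hcond_e.trans (hp_eq.trans_le ?_)
    filter_upwards [hcond n, hTnonneg n] with ω h1 h2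
    have hle : 1 + lam * (μ[d (n + 1) | ℱ n]) ω +
        ((1 / 2) * lam ^ 2 * c) * (μ[fun ω' => (d (n + 1) ω') ^ 2 | ℱ n]) ω ≤ 1 + g ω := by
      simp only [hg_def]
      nlinarith [mul_nonpos_of_nonneg_of_nonpos hlam h1]
    calc _ ≤ 1 + g ω := hle
    _ ≤ Real.exp (g ω) := by linarith [Real.add_one_le_exp (g ω)]
  -- conclude
  rw [hprod]
  refine hpull.trans_le ?_
  filter_upwards [hkey] with ω h
  have hφnn : 0 ≤ φ ω := mul_nonneg (Real.exp_nonneg _) (Real.exp_nonneg _)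
  calc (φ * μ[e | ℱ n]) ω = φ ω * (μ[e | ℱ n]) ω := rfl
  _ ≤ φ ω * Real.exp (g ω) := mul_le_mul_of_nonneg_left h hφnn
  _ = F n ω := by
      simp only [hφ_def]
      rw [mul_assoc, ← Real.exp_add, neg_add_cancel, Real.exp_zero, mul_one]
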